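/- Let D > 0, R₀ > 0, a > 0, and let û be the unique function in C²([R₀, ∞)) with û(R₀) = a, û > 0, û''(r) + (2/r) û'(r) = D û(r)^{3/2} on (R₀, ∞), and û(r) → 0 as r → ∞. Then there is a constant C > 0 such that û(r) ≤ C r^{−4} for all r ≥ R₀; in particular ∫_{R₀}^∞ r² û(r)^{3/2} dr < ∞, i.e. the corresponding radial density û(|x|)^{3/2} is integrable on ℝ³ outside the ball of radius R₀. -/

import Mathlib

open Set Filter MeasureTheory

noncomputable section

/-- `u` is a positive solution of the atmospheric equation
`u'' + (2/r)u' = D u^{3/2}` on `[R₀,∞)` with `u(R₀) = a` and `u(r) → 0` as `r → ∞`. -/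
def IsAtmosSol (D R₀ a : ℝ) (u : ℝ → ℝ) : Prop :=
  ContDiffOn ℝ 2 u (Ici R₀) ∧ u R₀ = a ∧ (∀ r : ℝ, R₀ ≤ r → 0 < u r) ∧
  (∀ r : ℝ, R₀ < r →
    deriv (deriv u) r + 2 / r * deriv u r = D * u r ^ ((3:ℝ)/2)) ∧
  Tendsto u atTop (nhds 0)

/-- At an interior local maximum, the second derivative is nonpositive. -/
lemma second_deriv_nonpos_of_isLocalMax {φ : ℝ → ℝ} {x : ℝ}
    (hmax : IsLocalMax φ x) (hd : ∀ᶠ y in nhds x, DifferentiableAt ℝ φ y)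
    (hd2 : DifferentiableAt ℝ (deriv φ) x) : deriv (deriv φ) x ≤ 0 := by
  by_contra hc
  push_neg at hc
  have h0 : deriv φ x = 0 := hmax.deriv_eq_zero
  have hda : HasDerivAt (deriv φ) (deriv (deriv φ) x) x := hd2.hasDerivAt
  have hslope : Tendsto (slope (deriv φ) x) (nhdsWithin x {x}ᶜ) (nhds (deriv (deriv φ) x)) :=
    hasDerivAt_iff_tendsto_slope.mp hda
  have hpos : ∀ᶠ y in nhdsWithin x {x}ᶜ, 0 < slope (deriv φ) x y :=
    hslope.eventually (eventually_gt_nhds hc)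
  have hpos' : ∀ᶠ y in nhds x, y ∈ ({x}ᶜ : Set ℝ) → 0 < slope (deriv φ) x y :=
    eventually_nhdsWithin_iff.mp hpos
  obtain ⟨ε, hε, hball⟩ := Metric.eventually_nhds_iff.mp
    ((hpos'.and hd).and (hmax : ∀ᶠ y in nhds x, φ y ≤ φ x))
  have hmem : ∀ y ∈ Ico x (x + ε), dist y x < ε := by
    intro y hy
    rw [Real.dist_eq, abs_of_nonneg (by linarith [hy.1])]
    linarith [hy.2]
  have hder : ∀ y ∈ Ioo x (x + ε), 0 < deriv φ y := by
    intro y hy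
    have hs := ((hball (hmem y ⟨hy.1.le, hy.2⟩)).1.1 (by simp [ne_of_gt hy.1]))
    rw [slope_def_field, h0, sub_zero] at hs
    have hyx : 0 < y - x := by linarith [hy.1]
    have := mul_pos hs hyx
    rwa [div_mul_cancel₀ _ (ne_of_gt hyx)] at this
  have hcont : ContinuousOn φ (Ico x (x + ε)) := fun y hy =>
    ((hball (hmem y hy)).1.2).continuousAt.continuousWithinAt
  have hmono : StrictMonoOn φ (Ico x (x + ε)) := by
    apply strictMonoOn_of_deriv_pos (convex_Ico _ _) hcont
    intro y hy
    rw [interior_Ico] at hy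
    exact hder y hy
  have h1 : φ x < φ (x + ε / 2) :=
    hmono ⟨le_refl x, by linarith⟩ ⟨by linarith, by linarith⟩ (by linarith)
  have h2 : φ (x + ε / 2) ≤ φ x :=
    (hball (y := x + ε / 2) (by rw [Real.dist_eq, abs_of_nonneg] <;> linarith)).2
  linarith

/-- Lemma 5.11: the positive solution of the atmospheric problem tending to zero at
infinity decays at least like `r^{-4}`, and the corresponding radial density
`u^{3/2}` is integrable outside the ball of radius `R₀`. -/
theorem stmt18 (D R₀ a : ℝ) (hD : 0 < D) (hR₀ : 0 < R₀) (ha : 0 < a)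
    (u : ℝ → ℝ) (hu : IsAtmosSol D R₀ a u) :
    (∃ C : ℝ, 0 < C ∧ ∀ r : ℝ, R₀ ≤ r → u r ≤ C / r ^ 4) ∧
    IntegrableOn (fun r : ℝ => r ^ 2 * u r ^ ((3:ℝ)/2)) (Ioi R₀) := by
  obtain ⟨hC2, hua, hpos, hODE, hlim⟩ := hu
  set K : ℝ := max (144 / D ^ 2) (a * R₀ ^ 4) with hKdef
  have hKpos : 0 < K := lt_max_of_lt_right (by positivity)
  have hK1 : 144 / D ^ 2 ≤ K := le_max_left _ _
  have hK2 : a * R₀ ^ 4 ≤ K := le_max_right _ _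
  -- rpow computation
  have hrw : ∀ x : ℝ, 0 < x → (K / x ^ 4) ^ ((3:ℝ)/2) = K ^ ((3:ℝ)/2) / x ^ 6 := by
    intro x hx
    rw [Real.div_rpow hKpos.le (by positivity)]
    congr 1
    rw [← Real.rpow_natCast x 4, ← Real.rpow_mul hx.le, ← Real.rpow_natCast x 6]
    norm_num
  have hK32 : 12 * K ≤ D * K ^ ((3:ℝ)/2) := by
    have hs : 12 / D ≤ Real.sqrt K := by
      have h1 : Real.sqrt (144 / D ^ 2) = 12 / D := by
        rw [show (144 / D ^ 2 : ℝ) = (12 / D) ^ 2 by rw [div_pow]; norm_num, Real.sqrt_sq (by positivity)]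
      calc 12 / D = Real.sqrt (144 / D ^ 2) := h1.symm
        _ ≤ Real.sqrt K := Real.sqrt_le_sqrt hK1
    have hexp : K ^ ((3:ℝ)/2) = K * Real.sqrt K := by
      rw [show (3:ℝ)/2 = 1 + 1/2 by norm_num, Real.rpow_add hKpos, Real.rpow_one,
        Real.sqrt_eq_rpow]
    rw [hexp]
    calc 12 * K = (12 / D) * K * D := by field_simp
      _ ≤ Real.sqrt K * K * D := by
          apply mul_le_mul_of_nonneg_right (mul_le_mul_of_nonneg_right hs hKpos.le) hD.le
      _ = D * (K * Real.sqrt K) := by ring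
  -- differentiability facts
  have hu1 : ∀ y ∈ Ioi R₀, DifferentiableAt ℝ u y := fun y hy =>
    (hC2.differentiableOn (by norm_num) y (Ioi_subset_Ici_self hy)).differentiableAt
      (Ici_mem_nhds hy)
  have hcd : ContDiffOn ℝ 1 (deriv u) (Ioi R₀) :=
    (hC2.mono Ioi_subset_Ici_self).deriv_of_isOpen isOpen_Ioi (by norm_num)
  have hu2 : ∀ y ∈ Ioi R₀, DifferentiableAt ℝ (deriv u) y := fun y hy =>
    ((hcd.differentiableOn (by norm_num)) y hy).differentiableAt (isOpen_Ioi.mem_nhds hy)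
  have hg1 : ∀ y : ℝ, 0 < y → HasDerivAt (fun r : ℝ => K / r ^ 4) (-(4 * K) / y ^ 5) y := by
    intro y hy
    have h4 : HasDerivAt (fun r : ℝ => r ^ 4) (4 * y ^ 3) y := by
      simpa using hasDerivAt_pow 4 y
    have h := (hasDerivAt_const y K).div h4 (by positivity)
    refine h.congr_deriv ?_
    rw [div_eq_div_iff (by positivity) (by positivity)]
    ring
  have hg2 : ∀ y : ℝ, 0 < y → HasDerivAt (fun r : ℝ => 4 * K / r ^ 5) (-(20 * K) / y ^ 6) y := by
    intro y hy
    have h5 : HasDerivAt (fun r : ℝ => r ^ 5) (5 * y ^ 4) y := by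
      simpa using hasDerivAt_pow 5 y
    have h := (hasDerivAt_const y (4 * K)).div h5 (by positivity)
    refine h.congr_deriv ?_
    rw [div_eq_div_iff (by positivity) (by positivity)]
    ring
  -- main bound
  have hbound : ∀ r : ℝ, R₀ ≤ r → u r ≤ K / r ^ 4 := by
    by_contra hcon
    push_neg at hcon
    obtain ⟨r₁, hr₁, hgt⟩ := hcon
    set φ : ℝ → ℝ := fun r => u r - K / r ^ 4 with hφdef
    have hφr₁ : 0 < φ r₁ := by simp only [hφdef]; linarith
    have hg0 : Tendsto (fun r : ℝ => K / r ^ 4) atTop (nhds 0) :=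
      tendsto_const_nhds.div_atTop (tendsto_pow_atTop (by norm_num))
    have hφ0 : Tendsto φ atTop (nhds 0) := by
      simpa using hlim.sub hg0
    obtain ⟨M, hM⟩ := Filter.eventually_atTop.mp (hφ0.eventually (eventually_lt_nhds hφr₁))
    set M' := max M r₁ with hM'def
    have hRM : R₀ ≤ M' := le_trans hr₁ (le_max_right _ _)
    have hφcont : ContinuousOn φ (Icc R₀ M') :=
      (hC2.continuousOn.mono Icc_subset_Ici_self).sub
        (ContinuousOn.div continuousOn_const (continuous_pow 4).continuousOn
          (fun y hy => pow_ne_zero 4 (ne_of_gt (lt_of_lt_of_le hR₀ hy.1))))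
    obtain ⟨x, hxm, hxmax⟩ := isCompact_Icc.exists_isMaxOn ⟨R₀, left_mem_Icc.mpr hRM⟩ hφcont
    have hεx : φ r₁ ≤ φ x := hxmax ⟨hr₁, le_max_right _ _⟩
    have hglob : ∀ r, R₀ ≤ r → φ r ≤ φ x := by
      intro r hr
      rcases le_or_gt r M' with h | h
      · exact hxmax ⟨hr, h⟩
      · exact le_of_lt (lt_of_lt_of_le (hM r (le_trans (le_max_left _ _) h.le)) hεx)
    have hx0 : R₀ < x := by
      rcases lt_or_eq_of_le hxm.1 with h | h
      · exact h
      · exfalso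
        have haK : a ≤ K / R₀ ^ 4 := (le_div_iff₀ (by positivity)).mpr hK2
        have hφR : φ R₀ ≤ 0 := by
          simp only [hφdef, hua]; linarith
        rw [h] at hφR
        linarith
    have hxpos : 0 < x := hR₀.trans hx0
    have hloc : IsLocalMax φ x :=
      (isMaxOn_iff.mpr fun y hy => hglob y hy).isLocalMax (Ici_mem_nhds hx0)
    have hφd : ∀ y ∈ Ioi R₀, HasDerivAt φ (deriv u y + 4 * K / y ^ 5) y := by
      intro y hy
      have h := (hu1 y hy).hasDerivAt.sub (hg1 y (hR₀.trans hy))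
      refine h.congr_deriv ?_
      ring
    have hψeq : deriv φ =ᶠ[nhds x] fun y => deriv u y + 4 * K / y ^ 5 := by
      filter_upwards [isOpen_Ioi.mem_nhds hx0] with y hy
      exact (hφd y hy).deriv
    have hψd : DifferentiableAt ℝ (fun y : ℝ => deriv u y + 4 * K / y ^ 5) x :=
      (hu2 x hx0).add (hg2 x hxpos).differentiableAt
    have hd2 : DifferentiableAt ℝ (deriv φ) x := hψd.congr_of_eventuallyEq hψeq
    have hdd2 : deriv (deriv φ) x = deriv (deriv u) x + -(20 * K) / x ^ 6 := by
      rw [hψeq.deriv_eq]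
      exact ((hu2 x hx0).hasDerivAt.add (hg2 x hxpos)).deriv
    have hφ'0 : deriv u x + 4 * K / x ^ 5 = 0 := by
      rw [← (hφd x hx0).deriv]
      exact hloc.deriv_eq_zero
    have hsec : deriv (deriv φ) x ≤ 0 := by
      apply second_deriv_nonpos_of_isLocalMax hloc _ hd2
      filter_upwards [isOpen_Ioi.mem_nhds hx0] with y hy
      exact (hφd y hy).differentiableAt
    have hODEx := hODE x hx0
    have hux : K / x ^ 4 < u x := by
      have h0 : 0 < φ x := lt_of_lt_of_le hφr₁ hεx
      simp only [hφdef, sub_pos] at h0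
      exact h0
    have key : D * u x ^ ((3:ℝ)/2) ≤ 12 * K / x ^ 6 := by
      have h1 : deriv (deriv u) x + -(20 * K) / x ^ 6 ≤ 0 := by rw [← hdd2]; exact hsec
      have h2 : deriv u x = -(4 * K / x ^ 5) := by linarith
      have h3 : 2 / x * deriv u x = -(8 * K) / x ^ 6 := by
        rw [h2]; field_simp; ring
      have e1 : -(20 * K) / x ^ 6 = -(20 * (K / x ^ 6)) := by ring
      have e2 : -(8 * K) / x ^ 6 = -(8 * (K / x ^ 6)) := by ring
      have e3 : 12 * K / x ^ 6 = 12 * (K / x ^ 6) := by ring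
      linarith [h1, hODEx, h3, e1, e2, e3]
    have hlow : 12 * K / x ^ 6 < D * u x ^ ((3:ℝ)/2) := by
      have hr : (K / x ^ 4) ^ ((3:ℝ)/2) < u x ^ ((3:ℝ)/2) :=
        Real.rpow_lt_rpow (by positivity) hux (by norm_num)
      rw [hrw x hxpos] at hr
      calc 12 * K / x ^ 6 ≤ D * K ^ ((3:ℝ)/2) / x ^ 6 := by gcongr
        _ = D * (K ^ ((3:ℝ)/2) / x ^ 6) := by ring
        _ < D * u x ^ ((3:ℝ)/2) := by
            exact mul_lt_mul_of_pos_left hr hD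
    linarith
  refine ⟨⟨K, hKpos, hbound⟩, ?_⟩
  -- integrability
  have hcont1 : ContinuousOn (fun r : ℝ => r ^ 2 * u r ^ ((3:ℝ)/2)) (Ioi R₀) := by
    apply ContinuousOn.mul (continuous_pow 2).continuousOn
    exact (hC2.continuousOn.mono Ioi_subset_Ici_self).rpow_const
      (fun r hr => Or.inl (ne_of_gt (hpos r (le_of_lt hr))))
  have hint : IntegrableOn (fun r : ℝ => K ^ ((3:ℝ)/2) * r ^ (-4:ℝ)) (Ioi R₀) :=
    (integrableOn_Ioi_rpow_of_lt (by norm_num) hR₀).const_mul _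
  apply hint.mono' (hcont1.aestronglyMeasurable measurableSet_Ioi)
  rw [ae_restrict_iff' measurableSet_Ioi]
  apply ae_of_all
  intro r hr
  have hr0 : 0 < r := hR₀.trans hr
  have hu0 : 0 < u r := hpos r (le_of_lt hr)
  have hn : ‖r ^ 2 * u r ^ ((3:ℝ)/2)‖ = r ^ 2 * u r ^ ((3:ℝ)/2) := by
    rw [Real.norm_eq_abs, abs_of_nonneg (by positivity)]
  rw [hn]
  have h1 : u r ^ ((3:ℝ)/2) ≤ (K / r ^ 4) ^ ((3:ℝ)/2) :=
    Real.rpow_le_rpow hu0.le (hbound r (le_of_lt hr)) (by norm_num)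
  calc r ^ 2 * u r ^ ((3:ℝ)/2) ≤ r ^ 2 * (K / r ^ 4) ^ ((3:ℝ)/2) :=
        mul_le_mul_of_nonneg_left h1 (by positivity)
    _ = K ^ ((3:ℝ)/2) * r ^ (-4:ℝ) := by
        rw [hrw r hr0, show ((-4:ℝ)) = -((4:ℕ):ℝ) by norm_num, Real.rpow_neg hr0.le,
          Real.rpow_natCast]
        field_simp
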